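/- Let B be an invertible 2×2 real matrix, ℒ = Bℤ², ℒ̃ = 2π(Bᵀ)⁻¹ℤ², A a 2×2 integer matrix with d = |det A| ≠ 0, ℒ' = BAℤ², and (ℒ')̃ = 2π(Bᵀ)⁻¹(Aᵀ)⁻¹ℤ². Let λ₀ = 0, λ₁, …, λ_{d−1} ∈ (ℒ')̃ be a complete set of representatives of the d cosets of ℒ̃ in (ℒ')̃. Let S' ⊂ ℝ² be a bounded measurable set such that the translates S' + λ_m (m = 0, …, d−1) are pairwise disjoint up to Lebesgue-null sets. Then S' is a frequency support of ℒ' if and only if ⋃_{m=0}^{d−1}(S' + λ_m) is a frequency support of ℒ. -/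

import Mathlib

open scoped Matrix Real
open MeasureTheory

open scoped Pointwise

noncomputable def eI (t : ℝ) : ℂ := Complex.exp (Complex.I * t)

lemma eI_add (s t : ℝ) : eI (s + t) = eI s * eI t := by
  simp [eI, ← Complex.exp_add]; ring_nf

lemma eI_norm (t : ℝ) : ‖eI t‖ = 1 := by
  simp [eI, Complex.norm_exp]

lemma eI_two_pi_int (k : ℤ) : eI (2 * π * k) = 1 := by
  have h : (Complex.I * ((2 * π * k : ℝ) : ℂ)) = (k : ℤ) * (2 * π * Complex.I) := by
    push_cast; ring
  rw [eI, h, Complex.exp_int_mul, Complex.exp_two_pi_mul_I, one_zpow]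

lemma eI_eq_one_iff (t : ℝ) : eI t = 1 ↔ ∃ k : ℤ, t = 2 * π * k := by
  constructor
  · intro h
    rw [eI, Complex.exp_eq_one_iff] at h
    obtain ⟨k, hk⟩ := h
    refine ⟨k, ?_⟩
    have : (t : ℂ) = ((2 * π * k : ℝ) : ℂ) := by
      have hI : (Complex.I : ℂ) ≠ 0 := Complex.I_ne_zero
      have : Complex.I * (t : ℂ) = Complex.I * ((2 * π * k : ℝ) : ℂ) := by
        rw [hk]; push_cast; ring
      exact mul_left_cancel₀ hI this
    exact_mod_cast this
  · rintro ⟨k, rfl⟩; exact eI_two_pi_int k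

lemma dot_cast (k j : Fin 2 → ℤ) :
    (fun i => (k i : ℝ)) ⬝ᵥ (fun i => (j i : ℝ)) = ((k ⬝ᵥ j : ℤ) : ℝ) := by
  simp [dotProduct]

lemma mulVec_dot (M : Matrix (Fin 2) (Fin 2) ℝ) (x z : Fin 2 → ℝ) :
    M.mulVec x ⬝ᵥ z = x ⬝ᵥ Mᵀ.mulVec z := by
  rw [dotProduct_comm, Matrix.dotProduct_mulVec, dotProduct_comm,
    Matrix.mulVec_transpose]

lemma dot_smul_pair (M N : Matrix (Fin 2) (Fin 2) ℝ) (x y : Fin 2 → ℝ) :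
    M.mulVec x ⬝ᵥ ((2 * π) • N.mulVec y) = (2 * π) * (x ⬝ᵥ (Mᵀ * N).mulVec y) := by
  rw [dotProduct_smul, smul_eq_mul, mulVec_dot, Matrix.mulVec_mulVec]

lemma cast_mulVec (A : Matrix (Fin 2) (Fin 2) ℤ) (k : Fin 2 → ℤ) :
    (A.map (Int.cast : ℤ → ℝ)).mulVec (fun i => (k i : ℝ)) = fun i => ((A.mulVec k) i : ℝ) := by
  ext i; simp [Matrix.mulVec, dotProduct, Matrix.map]

/-- with `λ_m` coset representatives of `ℒ̃` in `(ℒ')̃` and `S'` bounded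
measurable with a.e.-disjoint translates `S' + λ_m`, the set `S'` is a frequency
support of `ℒ' = BAℤ²` iff `⋃_m (S' + λ_m)` is a frequency support of `ℒ = Bℤ²`. -/
theorem stmt_2 (B : Matrix (Fin 2) (Fin 2) ℝ) (hB : IsUnit B.det)
    (A : Matrix (Fin 2) (Fin 2) ℤ) (hA : A.det ≠ 0)
    (d : ℕ) (hd : d = A.det.natAbs)
    (L L' Lrec L'rec : Set (Fin 2 → ℝ))
    (hL : L = {x | ∃ k : Fin 2 → ℤ, x = B.mulVec fun i => (k i : ℝ)})
    (hL' : L' = {x | ∃ k : Fin 2 → ℤ,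
      x = (B * A.map (Int.cast : ℤ → ℝ)).mulVec fun i => (k i : ℝ)})
    (hLrec : Lrec = {x | ∃ k : Fin 2 → ℤ,
      x = (2 * π) • (B.transpose)⁻¹.mulVec fun i => (k i : ℝ)})
    (hL'rec : L'rec = {x | ∃ k : Fin 2 → ℤ,
      x = (2 * π) • ((B.transpose)⁻¹ * ((A.map (Int.cast : ℤ → ℝ)).transpose)⁻¹).mulVec
        fun i => (k i : ℝ)})
    (lam : Fin d → (Fin 2 → ℝ)) (hd0 : 0 < d)
    (hlam0 : lam ⟨0, hd0⟩ = 0)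
    (hlammem : ∀ m, lam m ∈ L'rec)
    (hlamrep : ∀ x ∈ L'rec, ∃! m : Fin d, x - lam m ∈ Lrec)
    (S' : Set (Fin 2 → ℝ)) (hS'meas : MeasurableSet S')
    (hS'bdd : Bornology.IsBounded S')
    (hdisj : ∀ m n : Fin d, m ≠ n →
      volume (((lam m + ·) '' S') ∩ ((lam n + ·) '' S')) = 0) :
    (∀ n ∈ L', ∫ ξ in S', Complex.exp (Complex.I * (n ⬝ᵥ ξ : ℝ)) =
        if n = 0 then (((2 * π) ^ 2 / |(B * A.map (Int.cast : ℤ → ℝ)).det| : ℝ) : ℂ)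
        else 0) ↔
    (∀ n ∈ L, ∫ ξ in ⋃ m : Fin d, (lam m + ·) '' S',
        Complex.exp (Complex.I * (n ⬝ᵥ ξ : ℝ)) =
        if n = 0 then (((2 * π) ^ 2 / |B.det| : ℝ) : ℂ) else 0) := by
  classical
  set A' : Matrix (Fin 2) (Fin 2) ℝ := A.map (Int.cast : ℤ → ℝ) with hA'def
  -- determinant facts
  have hA'det : A'.det = (A.det : ℝ) := (RingHom.map_det (Int.castRingHom ℝ) A).symm
  have hA'unit : IsUnit A'.det := by
    rw [hA'det]; exact isUnit_iff_ne_zero.mpr (by exact_mod_cast hA)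
  have hBTunit : IsUnit Bᵀ.det := by rwa [Matrix.det_transpose]
  have hA'Tunit : IsUnit A'ᵀ.det := by rwa [Matrix.det_transpose]
  have hdR : |(A.det : ℝ)| = (d : ℝ) := by
    rw [hd, Nat.cast_natAbs, Int.cast_abs]
  have hdetBA : |(B * A').det| = |B.det| * d := by
    rw [Matrix.det_mul, abs_mul, hA'det, hdR]
  have hdC : (d : ℂ) ≠ 0 := Nat.cast_ne_zero.mpr hd0.ne'
  have hdRne : (d : ℝ) ≠ 0 := Nat.cast_ne_zero.mpr hd0.ne'
  -- transpose-inverse product identities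
  have hTP1 : (B * A')ᵀ * ((Bᵀ)⁻¹ * (A'ᵀ)⁻¹) = 1 := by
    rw [Matrix.transpose_mul, mul_assoc, ← mul_assoc Bᵀ,
      Matrix.mul_nonsing_inv _ hBTunit, one_mul, Matrix.mul_nonsing_inv _ hA'Tunit]
  have hTP2 : Bᵀ * ((Bᵀ)⁻¹ * (A'ᵀ)⁻¹) = (A'ᵀ)⁻¹ := by
    rw [← mul_assoc, Matrix.mul_nonsing_inv _ hBTunit, one_mul]
  have hTP3 : Bᵀ * (Bᵀ)⁻¹ = 1 := Matrix.mul_nonsing_inv _ hBTunit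
  -- pairing: n ∈ L', μ ∈ L'rec
  have hpair1 : ∀ n ∈ L', ∀ μ ∈ L'rec, ∃ k : ℤ, n ⬝ᵥ μ = 2 * π * k := by
    rintro n hn μ hμ
    rw [hL'] at hn; rw [hL'rec] at hμ
    obtain ⟨k, rfl⟩ := hn; obtain ⟨j, rfl⟩ := hμ
    refine ⟨k ⬝ᵥ j, ?_⟩
    rw [dot_smul_pair, hTP1, Matrix.one_mulVec, dot_cast]
  -- pairing: n ∈ L, μ ∈ Lrec
  have hpair2 : ∀ n ∈ L, ∀ μ ∈ Lrec, ∃ k : ℤ, n ⬝ᵥ μ = 2 * π * k := by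
    rintro n hn μ hμ
    rw [hL] at hn; rw [hLrec] at hμ
    obtain ⟨k, rfl⟩ := hn; obtain ⟨j, rfl⟩ := hμ
    refine ⟨k ⬝ᵥ j, ?_⟩
    rw [dot_smul_pair, hTP3, Matrix.one_mulVec, dot_cast]
  -- L' ⊆ L
  have hsub : L' ⊆ L := by
    rw [hL, hL']
    rintro n ⟨k, rfl⟩
    exact ⟨A.mulVec k, by rw [← Matrix.mulVec_mulVec, cast_mulVec]⟩
  -- 0 ∈ L'
  have h0L' : (0 : Fin 2 → ℝ) ∈ L' := by
    rw [hL']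
    exact ⟨0, by rw [show (fun i : Fin 2 => ((0 : Fin 2 → ℤ) i : ℝ)) = 0 by ext i; simp,
      Matrix.mulVec_zero]⟩
  -- Lrec closed under sub, contains 0
  have hLrec_sub : ∀ x ∈ Lrec, ∀ y ∈ Lrec, x - y ∈ Lrec := by
    rw [hLrec]
    rintro x ⟨k, rfl⟩ y ⟨j, rfl⟩
    refine ⟨k - j, ?_⟩
    have h1 : (fun i => (((k - j) i : ℤ) : ℝ)) = (fun i => (k i : ℝ)) - fun i => (j i : ℝ) := by
      ext i; push_cast; simp
    rw [h1, Matrix.mulVec_sub, smul_sub]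
  have h0Lrec : (0 : Fin 2 → ℝ) ∈ Lrec := by
    rw [hLrec]
    exact ⟨0, by rw [show (fun i : Fin 2 => ((0 : Fin 2 → ℤ) i : ℝ)) = 0 by ext i; simp,
      Matrix.mulVec_zero, smul_zero]⟩
  -- L'rec closed under add
  have hL'rec_add : ∀ x ∈ L'rec, ∀ y ∈ L'rec, x + y ∈ L'rec := by
    rw [hL'rec]
    rintro x ⟨k, rfl⟩ y ⟨j, rfl⟩
    refine ⟨k + j, ?_⟩
    have h1 : (fun i => (((k + j) i : ℤ) : ℝ)) = (fun i => (k i : ℝ)) + fun i => (j i : ℝ) := by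
      ext i; push_cast; simp
    rw [h1, Matrix.mulVec_add, smul_add]
  -- key alternative
  have hkey : ∀ n ∈ L, n ∉ L' → ∃ μ ∈ L'rec, ∀ k : ℤ, n ⬝ᵥ μ ≠ 2 * π * k := by
    intro n hn hn'
    rw [hL] at hn
    obtain ⟨k, rfl⟩ := hn
    set w : Fin 2 → ℝ := A'⁻¹.mulVec (fun i => (k i : ℝ)) with hw
    by_cases hint : ∀ j : Fin 2, ∃ m : ℤ, w j = m
    · exfalso
      choose kk hkk using hint
      apply hn'
      rw [hL']
      refine ⟨kk, ?_⟩
      have hwk : (fun i => (kk i : ℝ)) = w := by ext i; rw [hkk]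
      have hAA : A'.mulVec w = fun i => (k i : ℝ) := by
        rw [hw, Matrix.mulVec_mulVec, Matrix.mul_nonsing_inv _ hA'unit, Matrix.one_mulVec]
      rw [hwk, ← Matrix.mulVec_mulVec, hAA]
    · push_neg at hint
      obtain ⟨j, hj⟩ := hint
      refine ⟨(2 * π) • ((Bᵀ)⁻¹ * (A'ᵀ)⁻¹).mulVec
        (fun i => ((Pi.single j 1 : Fin 2 → ℤ) i : ℝ)), ?_, ?_⟩
      · rw [hL'rec]; exact ⟨Pi.single j 1, rfl⟩
      · intro m hm
        rw [dot_smul_pair, hTP2] at hm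
        have h2π : (2 * π : ℝ) ≠ 0 := by positivity
        have heq : (fun i => (k i : ℝ)) ⬝ᵥ
            (A'ᵀ)⁻¹.mulVec (fun i => ((Pi.single j 1 : Fin 2 → ℤ) i : ℝ)) = (m : ℝ) :=
          mul_left_cancel₀ h2π hm
        apply hj m
        rw [← heq]
        have hsing : (fun i => ((Pi.single j 1 : Fin 2 → ℤ) i : ℝ)) =
            Pi.single j (1 : ℝ) := by
          ext i
          rcases eq_or_ne i j with rfl | hij
          · simp
          · simp [Pi.single_apply, hij]
        rw [hsing, ← Matrix.transpose_nonsing_inv, ← mulVec_dot,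
          dotProduct_single, mul_one]
  -- character sum
  have hsum : ∀ n ∈ L, (∑ m : Fin d, eI (n ⬝ᵥ lam m)) =
      if n ∈ L' then (d : ℂ) else 0 := by
    intro n hn
    by_cases hn' : n ∈ L'
    · rw [if_pos hn']
      have h1 : ∀ m : Fin d, eI (n ⬝ᵥ lam m) = 1 := by
        intro m
        obtain ⟨k, hk⟩ := hpair1 n hn' (lam m) (hlammem m)
        rw [hk]; exact eI_two_pi_int k
      calc ∑ m : Fin d, eI (n ⬝ᵥ lam m) = ∑ _m : Fin d, (1 : ℂ) :=
            Finset.sum_congr rfl fun m _ => h1 m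
        _ = d := by simp
    · rw [if_neg hn']
      obtain ⟨μ, hμmem, hμ⟩ := hkey n hn hn'
      set c : ℂ := eI (n ⬝ᵥ μ) with hc
      have hc1 : c ≠ 1 := by
        rw [hc]; intro h
        obtain ⟨k, hk⟩ := (eI_eq_one_iff _).mp h
        exact hμ k hk
      have hσex : ∀ m : Fin d, ∃! p : Fin d, lam m + μ - lam p ∈ Lrec :=
        fun m => hlamrep _ (hL'rec_add _ (hlammem m) _ hμmem)
      choose σ hσ hσu using hσex
      have hlaminj : ∀ m₁ m₂ : Fin d, lam m₁ - lam m₂ ∈ Lrec → m₁ = m₂ := by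
        intro m₁ m₂ hmm
        obtain ⟨p, _, hpu⟩ := hlamrep (lam m₁) (hlammem m₁)
        have e1 : m₁ = p := hpu m₁ (show lam m₁ - lam m₁ ∈ Lrec by
          rw [sub_self]; exact h0Lrec)
        have e2 : m₂ = p := hpu m₂ hmm
        rw [e1, e2]
      have hσinj : Function.Injective σ := by
        intro m₁ m₂ hσeq
        apply hlaminj
        have h1 := hσ m₁
        have h2 := hσ m₂
        rw [hσeq] at h1
        have h3 := hLrec_sub _ h1 _ h2
        convert h3 using 1
        abel
      have hσbij : Function.Bijective σ := Finite.injective_iff_bijective.mp hσinj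
      have hstep : ∀ m, eI (n ⬝ᵥ lam (σ m)) = c * eI (n ⬝ᵥ lam m) := by
        intro m
        obtain ⟨k, hk⟩ := hpair2 n hn _ (hσ m)
        have hd1 : n ⬝ᵥ (lam m + μ - lam (σ m)) =
            n ⬝ᵥ lam m + n ⬝ᵥ μ - n ⬝ᵥ lam (σ m) := by
          rw [dotProduct_sub, dotProduct_add]
        have h4 : n ⬝ᵥ lam m + n ⬝ᵥ μ = n ⬝ᵥ lam (σ m) + 2 * π * k := by
          rw [hd1] at hk; linarith
        calc eI (n ⬝ᵥ lam (σ m)) = eI (n ⬝ᵥ lam (σ m)) * eI (2 * π * k) := by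
              rw [eI_two_pi_int, mul_one]
          _ = eI (n ⬝ᵥ lam (σ m) + 2 * π * k) := (eI_add _ _).symm
          _ = eI (n ⬝ᵥ lam m + n ⬝ᵥ μ) := by rw [← h4]
          _ = c * eI (n ⬝ᵥ lam m) := by rw [eI_add, hc, mul_comm]
      have hsame : ∑ m : Fin d, eI (n ⬝ᵥ lam (σ m)) = ∑ m : Fin d, eI (n ⬝ᵥ lam m) :=
        hσbij.sum_comp (fun p => eI (n ⬝ᵥ lam p))
      rw [Finset.sum_congr rfl (fun m _ => hstep m), ← Finset.mul_sum] at hsame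
      have h0 : (c - 1) * (∑ m : Fin d, eI (n ⬝ᵥ lam m)) = 0 := by
        rw [sub_mul, one_mul, hsame, sub_self]
      rcases mul_eq_zero.mp h0 with h | h
      · exact absurd (sub_eq_zero.mp h) hc1
      · exact h
  -- integral splitting
  have hsplit : ∀ n : Fin 2 → ℝ,
      (∫ ξ in ⋃ m : Fin d, (lam m + ·) '' S', Complex.exp (Complex.I * (n ⬝ᵥ ξ : ℝ))) =
      (∑ m : Fin d, eI (n ⬝ᵥ lam m)) * ∫ ξ in S', Complex.exp (Complex.I * (n ⬝ᵥ ξ : ℝ)) := by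
    intro n
    have hfc : Continuous fun ξ : Fin 2 → ℝ => Complex.exp (Complex.I * (n ⬝ᵥ ξ : ℝ)) := by
      apply Complex.continuous_exp.comp
      apply continuous_const.mul
      apply Complex.continuous_ofReal.comp
      show Continuous fun ξ : Fin 2 → ℝ => ∑ i, n i * ξ i
      exact continuous_finset_sum _ fun i _ => continuous_const.mul (continuous_apply i)
    set s : Fin d → Set (Fin 2 → ℝ) := fun m => (lam m + ·) '' S' with hs
    have hsm : ∀ m, MeasurableSet (s m) := fun m =>
      (measurableEmbedding_addLeft (lam m)).measurableSet_image.mpr hS'meas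
    have hsbdd : ∀ m, Bornology.IsBounded (s m) := by
      intro m
      have h1 : s m = ({lam m} : Set (Fin 2 → ℝ)) + S' := by rw [Set.singleton_add]
      rw [h1]
      exact Bornology.isBounded_singleton.add hS'bdd
    have hTbdd : Bornology.IsBounded (⋃ m, s m) := Bornology.isBounded_iUnion.mpr hsbdd
    have hTfin : volume (⋃ m, s m) < ⊤ := hTbdd.measure_lt_top
    have hint : IntegrableOn (fun ξ => Complex.exp (Complex.I * (n ⬝ᵥ ξ : ℝ)))
        (⋃ m, s m) := by
      haveI : IsFiniteMeasure (volume.restrict (⋃ m, s m)) :=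
        ⟨by rwa [Measure.restrict_apply_univ]⟩
      refine (integrable_const (1 : ℝ)).mono' hfc.aestronglyMeasurable ?_
      exact Filter.Eventually.of_forall fun x => le_of_eq (eI_norm _)
    rw [integral_iUnion_ae (fun m => (hsm m).nullMeasurableSet)
      (fun m₁ m₂ hne => hdisj m₁ m₂ hne) hint, tsum_fintype, Finset.sum_mul]
    refine Finset.sum_congr rfl fun m _ => ?_
    have himg := (measurePreserving_add_left volume (lam m)).setIntegral_image_emb
      (measurableEmbedding_addLeft (lam m))
      (fun ξ => Complex.exp (Complex.I * (n ⬝ᵥ ξ : ℝ))) S'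
    rw [show s m = (fun x => lam m + x) '' S' from rfl, himg]
    have hfa : ∀ x : Fin 2 → ℝ, Complex.exp (Complex.I * (n ⬝ᵥ (lam m + x) : ℝ)) =
        eI (n ⬝ᵥ lam m) * Complex.exp (Complex.I * (n ⬝ᵥ x : ℝ)) := by
      intro x
      have : (Complex.exp (Complex.I * (n ⬝ᵥ (lam m + x) : ℝ))) = eI (n ⬝ᵥ (lam m + x)) := rfl
      rw [this, dotProduct_add, eI_add]
      rfl
    rw [show (∫ x in S', Complex.exp (Complex.I * (n ⬝ᵥ (lam m + x) : ℝ))) =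
        ∫ x in S', eI (n ⬝ᵥ lam m) * Complex.exp (Complex.I * (n ⬝ᵥ x : ℝ)) from
      integral_congr_ae (Filter.Eventually.of_forall fun x => hfa x)]
    exact integral_const_mul _ _
  -- assembly
  constructor
  · intro h n hn
    rw [hsplit n, hsum n hn]
    by_cases hn' : n ∈ L'
    · rw [if_pos hn', h n hn']
      by_cases h0 : n = 0
      · rw [if_pos h0, if_pos h0, hdetBA]
        rw [show ((2 * π) ^ 2 / (|B.det| * (d : ℝ)) : ℝ) = ((2 * π) ^ 2 / |B.det|) / (d : ℝ) by
          rw [div_div]]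
        rw [Complex.ofReal_div, Complex.ofReal_natCast, ← mul_div_assoc,
          mul_div_cancel_left₀ _ hdC]
      · rw [if_neg h0, if_neg h0, mul_zero]
    · rw [if_neg hn', zero_mul, if_neg]
      intro h0; exact hn' (h0 ▸ h0L')
  · intro h n hn'
    have hnL : n ∈ L := hsub hn'
    have hT := h n hnL
    rw [hsplit n, hsum n hnL, if_pos hn'] at hT
    by_cases h0 : n = 0
    · rw [if_pos h0] at hT ⊢
      have h2 : (∫ ξ in S', Complex.exp (Complex.I * (n ⬝ᵥ ξ : ℝ))) =
          (((2 * π) ^ 2 / |B.det| : ℝ) : ℂ) / d := by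
        rw [eq_div_iff hdC, mul_comm]; exact hT
      rw [hdetBA, show ((2 * π) ^ 2 / (|B.det| * (d : ℝ)) : ℝ) =
          ((2 * π) ^ 2 / |B.det|) / (d : ℝ) by rw [div_div],
        Complex.ofReal_div, Complex.ofReal_natCast, h2]
    · rw [if_neg h0] at hT ⊢
      exact (mul_eq_zero.mp hT).resolve_left hdC
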